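/- (Quasi-formal Euler's identity) For every natural number k, the function y ↦ ∑_{n=0}^∞ (−1)^n y^{n+k+1} / (n! (n+k+1)) (which is the formal primitive of the power series of a^k e^{−a} evaluated at y; the series converges absolutely for every real y) tends to k! as y → +∞. -/

import Mathlib

open Filter Topology MeasureTheory Set

private lemma real_exp_tsum (x : ℝ) : Real.exp x = ∑' n : ℕ, x ^ n / n.factorial := by
  rw [Real.exp_eq_exp_ℝ, NormedSpace.exp_eq_tsum_div]

private lemma summ_aux (k : ℕ) (y : ℝ) :
    Summable fun n : ℕ =>
      |(-1 : ℝ) ^ n * y ^ (n + k + 1) / ((n.factorial : ℝ) * ((n : ℝ) + k + 1))| := by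
  have h := (Real.summable_pow_div_factorial |y|).mul_left (|y| ^ (k + 1))
  refine h.of_nonneg_of_le (fun n => abs_nonneg _) fun n => ?_
  have h1 : (0 : ℝ) < n.factorial := by positivity
  have h2 : (0 : ℝ) < (n : ℝ) + k + 1 := by positivity
  rw [abs_div, abs_mul, abs_mul, abs_pow, abs_pow, abs_neg, abs_one, one_pow, one_mul,
    abs_of_pos h1, abs_of_pos h2]
  rw [div_le_iff₀ (by positivity)]
  have hsimp : |y| ^ (k + 1) * (|y| ^ n / n.factorial) * (n.factorial * ((n : ℝ) + k + 1))
      = |y| ^ (n + k + 1) * ((n : ℝ) + k + 1) := by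
    field_simp
    ring
  rw [hsimp]
  nlinarith [pow_nonneg (abs_nonneg y) (n + k + 1)]

private lemma hasDeriv_aux (k : ℕ) (x : ℝ) :
    HasDerivAt (fun y : ℝ =>
        ∑' n : ℕ, (-1 : ℝ) ^ n * y ^ (n + k + 1) / ((n.factorial : ℝ) * ((n : ℝ) + k + 1)))
      (x ^ k * Real.exp (-x)) x := by
  set R : ℝ := |x| + 1 with hR
  have hxR : |x| < R := by simp [hR]
  have hxmem : x ∈ Ioo (-R) R := by
    have := abs_lt.mp hxR
    exact ⟨this.1, this.2⟩
  have key : HasDerivAt (fun y : ℝ =>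
        ∑' n : ℕ, (-1 : ℝ) ^ n * y ^ (n + k + 1) / ((n.factorial : ℝ) * ((n : ℝ) + k + 1)))
      (∑' n : ℕ, (-1 : ℝ) ^ n * x ^ (n + k) / (n.factorial : ℝ)) x := by
    refine hasDerivAt_tsum_of_isPreconnected
      (u := fun n : ℕ => R ^ k * (R ^ n / n.factorial))
      (g' := fun (n : ℕ) (y : ℝ) => (-1 : ℝ) ^ n * y ^ (n + k) / (n.factorial : ℝ))
      ((Real.summable_pow_div_factorial R).mul_left _)
      (isOpen_Ioo (a := -R) (b := R)) (isPreconnected_Ioo)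
      (fun n y _ => ?_) (fun n y hy => ?_) hxmem
      ((summ_aux k x).of_abs) hxmem
    · have h2 : ((n : ℝ) + k + 1) ≠ 0 := by positivity
      have h1 : ((n.factorial : ℝ)) ≠ 0 := by positivity
      have hd := (hasDerivAt_pow (n + k + 1) y).const_mul
        ((-1 : ℝ) ^ n / ((n.factorial : ℝ) * ((n : ℝ) + k + 1)))
      have hfun : (fun y : ℝ => (-1 : ℝ) ^ n / ((n.factorial : ℝ) * ((n : ℝ) + k + 1))
          * y ^ (n + k + 1))
          = fun y : ℝ => (-1 : ℝ) ^ n * y ^ (n + k + 1)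
            / ((n.factorial : ℝ) * ((n : ℝ) + k + 1)) := by
        funext z; ring
      rw [hfun] at hd
      have hval : (-1 : ℝ) ^ n / ((n.factorial : ℝ) * ((n : ℝ) + k + 1))
          * (((n + k + 1 : ℕ) : ℝ) * y ^ (n + k + 1 - 1))
          = (-1 : ℝ) ^ n * y ^ (n + k) / (n.factorial : ℝ) := by
        rw [Nat.add_sub_cancel]
        push_cast
        field_simp
      rw [hval] at hd
      exact hd
    · have hyR : |y| ≤ R := by
        rw [abs_le]; exact ⟨hy.1.le, hy.2.le⟩
      have hnorm : ‖(-1 : ℝ) ^ n * y ^ (n + k) / (n.factorial : ℝ)‖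
          = |y| ^ (n + k) / n.factorial := by
        rw [norm_div, norm_mul, norm_pow, norm_pow, norm_neg, norm_one, one_pow, one_mul,
          Real.norm_natCast, Real.norm_eq_abs]
      rw [hnorm]
      have hb : |y| ^ (n + k) ≤ R ^ (n + k) :=
        pow_le_pow_left₀ (abs_nonneg y) hyR _
      calc |y| ^ (n + k) / n.factorial ≤ R ^ (n + k) / n.factorial := by
            exact div_le_div_of_nonneg_right hb (by positivity) |>.trans_eq rfl
        _ = R ^ k * (R ^ n / n.factorial) := by rw [pow_add]; ring
  convert key using 1
  rw [real_exp_tsum (-x), ← tsum_mul_left]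
  congr 1 with n
  rw [pow_add x n k, neg_pow]
  ring

/-- Quasi-formal Euler's identity: the value at y of the formal primitive of the
power series of a^k e^{−a}, i.e. ∑_{n=0}^∞ (−1)^n y^{n+k+1}/(n!(n+k+1)) (a series
converging absolutely for every real y), tends to k! as y → +∞. -/
theorem quasi_formal_euler (k : ℕ) :
    (∀ y : ℝ, Summable fun n : ℕ =>
      |(-1 : ℝ) ^ n * y ^ (n + k + 1) / ((n.factorial : ℝ) * ((n : ℝ) + k + 1))|) ∧
    Tendsto (fun y : ℝ =>
        ∑' n : ℕ, (-1 : ℝ) ^ n * y ^ (n + k + 1) / ((n.factorial : ℝ) * ((n : ℝ) + k + 1)))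
      atTop (𝓝 (k.factorial : ℝ)) := by
  refine ⟨summ_aux k, ?_⟩
  set F : ℝ → ℝ := fun y =>
    ∑' n : ℕ, (-1 : ℝ) ^ n * y ^ (n + k + 1) / ((n.factorial : ℝ) * ((n : ℝ) + k + 1)) with hF
  have hF0 : F 0 = 0 := by
    rw [hF]
    simp
  have hint : IntegrableOn (fun t : ℝ => Real.exp (-t) * t ^ ((k : ℝ) + 1 - 1)) (Ioi 0) :=
    Real.GammaIntegral_convergent (by positivity)
  have hint' : IntegrableOn (fun t : ℝ => t ^ k * Real.exp (-t)) (Ioi 0) := by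
    refine hint.congr_fun (fun t ht => ?_) measurableSet_Ioi
    beta_reduce
    rw [add_sub_cancel_right, Real.rpow_natCast, mul_comm]
  have hΓ : ∫ t in Ioi (0:ℝ), t ^ k * Real.exp (-t) = (k.factorial : ℝ) := by
    have hg := Real.Gamma_eq_integral (s := (k : ℝ) + 1) (by positivity)
    rw [Real.Gamma_nat_eq_factorial] at hg
    rw [hg]
    refine setIntegral_congr_fun measurableSet_Ioi fun t _ => ?_
    rw [add_sub_cancel_right, Real.rpow_natCast, mul_comm]
  have heq : ∀ y : ℝ, F y = ∫ t in (0:ℝ)..y, t ^ k * Real.exp (-t) := by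
    intro y
    have hfd := intervalIntegral.integral_eq_sub_of_hasDerivAt
      (f := F) (f' := fun t => t ^ k * Real.exp (-t)) (a := 0) (b := y)
      (fun t _ => hasDeriv_aux k t) ?_
    · rw [hfd, hF0, sub_zero]
    · apply Continuous.intervalIntegrable
      exact (continuous_pow k).mul (Real.continuous_exp.comp continuous_neg)
  have htend := intervalIntegral_tendsto_integral_Ioi 0 hint' tendsto_id
  rw [hΓ] at htend
  exact htend.congr fun y => (heq y).symm
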